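/- Let h be a symmetric bilinear form on a real vector space V and B ∈ V with h(B,B) ≠ 0, and define the symmetric bilinear form g = (4/h(B,B))·h. Then for every v ∈ V: h(v,v) = h(v,B) if and only if g(v − B/2, v − B/2) = 1. In other words, the indicatrix of the pseudo-Kropina metric K(v) = h(v,v)/h(v,B) is the translation by the vector B/2 of the indicatrix of g. -/

import Mathlib

/-- For `h(B,B) ≠ 0` and `g = (4/h(B,B))·h`, one has `h(v,v) = h(v,B)` iff
`g(v − B/2, v − B/2) = 1`: the indicatrix of the pseudo-Kropina metric
`K(v) = h(v,v)/h(v,B)` is the translation by `B/2` of the indicatrix of `g`. -/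
theorem stmt8 {V : Type*} [AddCommGroup V] [Module ℝ V]
    (h : V →ₗ[ℝ] V →ₗ[ℝ] ℝ) (hhsym : ∀ x y : V, h x y = h y x) (B : V)
    (hB : h B B ≠ 0)
    (g : V → V → ℝ) (hg : ∀ u u' : V, g u u' = (4 / h B B) * h u u') :
    ∀ v : V, h v v = h v B ↔ g (v - (2 : ℝ)⁻¹ • B) (v - (2 : ℝ)⁻¹ • B) = 1 := by
  intro v
  rw [hg]
  have expand : h (v - (2 : ℝ)⁻¹ • B) (v - (2 : ℝ)⁻¹ • B)
      = h v v - h v B + (4 : ℝ)⁻¹ * h B B := by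
    simp [map_sub, map_smul, hhsym B v]
    ring
  rw [expand]
  constructor
  · intro hv
    rw [hv]
    field_simp
    ring
  · intro hv
    have : (4 / h B B) * (h v v - h v B + (4 : ℝ)⁻¹ * h B B) - 4 / h B B * ((4:ℝ)⁻¹ * h B B) = 1 - 1 := by
      rw [hv]; field_simp
    field_simp at this
    nlinarith [this]
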